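/- For every real ξ > 0, every complex ρ with |ρ| = 1, and all positive integers h ≤ L: S(ξ,ρ,L) ≤ S(ξ,ρ,L−h)·F(ξ,h), where S(ξ,ρ,L) = ∫₀¹ exp(ξ·Re(ρ·T_L(α))) dα and F(ξ,h) = sup over β ∈ [0,1] and complex ρ' with |ρ'| = 1 of 2^{−h}·∑_{r=0}^{2^h−1} exp(ξ·Re(ρ'·T_h((β+r)/2^h))). -/

import Mathlib

/-- `e x = exp(2πix)`. -/
noncomputable def e (x : ℝ) : ℂ := Complex.exp (2 * Real.pi * Complex.I * x)

/-- `T_L(α) = ∑_{0 ≤ n ≤ L-1} e(α·2^n)` (so `T_0 = 0`). -/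
noncomputable def Th (L : ℕ) (α : ℝ) : ℂ := ∑ n ∈ Finset.range L, e (α * 2 ^ n)

/-- `S(ξ,ρ,L) = ∫₀¹ exp(ξ·Re(ρ·T_L(α))) dα`. -/
noncomputable def Sint (ξ : ℝ) (ρ : ℂ) (L : ℕ) : ℝ :=
  ∫ α in (0 : ℝ)..1, Real.exp (ξ * (ρ * Th L α).re)

/-- `F(ξ,h) = sup_{β ∈ [0,1], |ρ'| = 1} 2^{-h} ∑_{r<2^h} exp(ξ·Re(ρ'·T_h((β+r)/2^h)))`. -/
noncomputable def F (ξ : ℝ) (h : ℕ) : ℝ :=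
  sSup {y : ℝ | ∃ β ∈ Set.Icc (0 : ℝ) 1, ∃ ρ' : ℂ, ‖ρ'‖ = 1 ∧
    y = ((2 : ℝ) ^ h)⁻¹ *
      ∑ r ∈ Finset.range (2 ^ h), Real.exp (ξ * (ρ' * Th h ((β + r) / 2 ^ h)).re)}

lemma abs_e (x : ℝ) : ‖e x‖ = 1 := by
  simp [e, Complex.norm_exp, Complex.mul_re, Complex.mul_im]

lemma cont_e : Continuous e := by unfold e; fun_prop

lemma cont_Th (L : ℕ) : Continuous (Th L) := by
  unfold Th
  exact continuous_finset_sum _ fun n _ => cont_e.comp (by fun_prop : Continuous fun α : ℝ => α * 2 ^ n)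

lemma cont_integrand (ξ : ℝ) (ρ : ℂ) (L : ℕ) :
    Continuous fun α => Real.exp (ξ * (ρ * Th L α).re) := by
  have := cont_Th L
  fun_prop

lemma e_add_nat (x : ℝ) (k : ℕ) : e (x + k) = e x := by
  unfold e
  push_cast
  rw [mul_add, Complex.exp_add]
  have : Complex.exp (2 * ↑Real.pi * Complex.I * (k : ℂ)) = 1 := by
    have := Complex.exp_int_mul_two_pi_mul_I (k : ℤ)
    push_cast at this ⊢
    rw [← this]; ring_nf
  rw [this, mul_one]

lemma Th_add_nat (m : ℕ) (β : ℝ) (r : ℕ) : Th m (β + r) = Th m β := by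
  unfold Th
  refine Finset.sum_congr rfl fun n _ => ?_
  rw [add_mul]
  have : (r : ℝ) * 2 ^ n = ((r * 2 ^ n : ℕ) : ℝ) := by push_cast; ring
  rw [this, e_add_nat]

lemma Th_split (h L : ℕ) (hhL : h ≤ L) (α : ℝ) :
    Th L α = Th h α + Th (L - h) (2 ^ h * α) := by
  obtain ⟨m, rfl⟩ : ∃ m, L = h + m := ⟨L - h, by omega⟩
  rw [Nat.add_sub_cancel_left]
  unfold Th
  rw [Finset.sum_range_add]
  congr 1
  refine Finset.sum_congr rfl fun n _ => ?_
  congr 1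
  rw [pow_add]; ring

lemma abs_Th_le (m : ℕ) (x : ℝ) : ‖Th m x‖ ≤ m := by
  unfold Th
  calc ‖∑ n ∈ Finset.range m, e (x * 2 ^ n)‖
      ≤ ∑ n ∈ Finset.range m, ‖e (x * 2 ^ n)‖ := by
        exact norm_sum_le _ _
    _ = m := by simp [abs_e]

lemma F_bddAbove (ξ : ℝ) (hξ : 0 ≤ ξ) (h : ℕ) :
    BddAbove {y : ℝ | ∃ β ∈ Set.Icc (0 : ℝ) 1, ∃ ρ' : ℂ, ‖ρ'‖ = 1 ∧
    y = ((2 : ℝ) ^ h)⁻¹ *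
      ∑ r ∈ Finset.range (2 ^ h), Real.exp (ξ * (ρ' * Th h ((β + r) / 2 ^ h)).re)} := by
  refine ⟨Real.exp (ξ * h), ?_⟩
  rintro y ⟨β, hβ, ρ', hρ', rfl⟩
  have key : ∀ r : ℕ, Real.exp (ξ * (ρ' * Th h ((β + r) / 2 ^ h)).re) ≤ Real.exp (ξ * h) := by
    intro r
    refine Real.exp_le_exp.2 (mul_le_mul_of_nonneg_left ?_ hξ)
    calc (ρ' * Th h ((β + r) / 2 ^ h)).re ≤ ‖ρ' * Th h ((β + r) / 2 ^ h)‖ :=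
          Complex.re_le_norm _
      _ = ‖Th h ((β + r) / 2 ^ h)‖ := by rw [norm_mul, hρ', one_mul]
      _ ≤ h := abs_Th_le _ _
  calc ((2 : ℝ) ^ h)⁻¹ * ∑ r ∈ Finset.range (2 ^ h),
        Real.exp (ξ * (ρ' * Th h ((β + r) / 2 ^ h)).re)
      ≤ ((2 : ℝ) ^ h)⁻¹ * ∑ r ∈ Finset.range (2 ^ h), Real.exp (ξ * h) := by
        refine mul_le_mul_of_nonneg_left (Finset.sum_le_sum fun r _ => key r) (by positivity)
    _ = Real.exp (ξ * h) := by
        rw [Finset.sum_const, Finset.card_range, nsmul_eq_mul]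
        push_cast
        field_simp

/-- The submultiplicative recursion `S(ξ,ρ,L) ≤ S(ξ,ρ,L-h)·F(ξ,h)` for `h ≤ L`. -/
theorem Sint_le_Sint_mul_F (ξ : ℝ) (hξ : 0 < ξ) (ρ : ℂ) (hρ : ‖ρ‖ = 1)
    (h L : ℕ) (hh : 0 < h) (hhL : h ≤ L) :
    Sint ξ ρ L ≤ Sint ξ ρ (L - h) * F ξ h := by
  have hc0 : (0:ℝ) < (2:ℝ) ^ h := by positivity
  set c : ℝ := (2:ℝ) ^ h with hc
  set f : ℝ → ℝ := fun α => Real.exp (ξ * (ρ * Th L α).re) with hf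
  have hfc : Continuous f := cont_integrand ξ ρ L
  set A : ℝ → ℝ := fun β => Real.exp (ξ * (ρ * Th (L - h) β).re) with hA
  have hAc : Continuous A := cont_integrand ξ ρ (L - h)
  set g : ℕ → ℝ → ℝ := fun r β => Real.exp (ξ * (ρ * Th h ((β + r) / c)).re) with hg
  have hgc : ∀ r, Continuous (g r) := by
    intro r
    have := cont_Th h
    fun_prop
  set a : ℕ → ℝ := fun k => (k:ℝ)/c with ha
  have ha0 : a 0 = 0 := by simp [ha]
  have ha1 : a (2 ^ h) = 1 := by
    simp only [ha, hc]
    push_cast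
    field_simp
  -- Step 1: split [0,1] into 2^h pieces
  have step1 : Sint ξ ρ L = ∑ r ∈ Finset.range (2 ^ h), ∫ x in a r..a (r+1), f x := by
    have key := intervalIntegral.sum_integral_adjacent_intervals
      (μ := MeasureTheory.volume) (a := a) (n := 2 ^ h)
      (f := f) (fun k _ => (hfc.intervalIntegrable _ _))
    rw [ha0, ha1] at key
    rw [Sint, ← key]
  -- Step 2: substitution on each piece
  have step2 : ∀ r : ℕ, (∫ x in a r..a (r+1), f x)
      = c⁻¹ * ∫ β in (0:ℝ)..1, f ((β + r)/c) := by
    intro r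
    have e1 : (∫ β in (0:ℝ)..1, f ((β + r)/c))
        = ∫ x in ((0:ℝ)+r)..((1:ℝ)+r), f (x/c) :=
      intervalIntegral.integral_comp_add_right (fun x => f (x/c)) (r:ℝ)
    have e2 : (∫ x in ((0:ℝ)+r)..((1:ℝ)+r), f (x/c))
        = c • ∫ x in (((0:ℝ)+r)/c)..(((1:ℝ)+r)/c), f x :=
      intervalIntegral.integral_comp_div f hc0.ne'
    rw [e1, e2, smul_eq_mul, ← mul_assoc, inv_mul_cancel₀ hc0.ne', one_mul]
    have hr : a r = ((0:ℝ)+(r:ℝ))/c := by simp [ha]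
    have hr1 : a (r+1) = ((1:ℝ)+(r:ℝ))/c := by
      simp only [ha]
      push_cast
      ring_nf
    rw [hr, hr1]
  -- Step 3: factor the integrand
  have step3 : ∀ (r : ℕ) (β : ℝ), f ((β + r)/c) = g r β * A β := by
    intro r β
    have hTh : Th L ((β + r)/c) = Th h ((β + r)/c) + Th (L - h) β := by
      rw [Th_split h L hhL]
      congr 1
      rw [show (2:ℝ)^h * ((β + (r:ℝ))/c) = β + r by rw [hc]; field_simp]
      exact Th_add_nat _ β r
    simp only [hf, hg, hA, hTh, mul_add, Complex.add_re, ← Real.exp_add]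
  -- Step 4: rewrite Sint as a single integral
  have step4 : Sint ξ ρ L
      = ∫ β in (0:ℝ)..1, A β * (c⁻¹ * ∑ r ∈ Finset.range (2 ^ h), g r β) := by
    rw [step1]
    have e3 : ∀ r ∈ Finset.range (2 ^ h),
        (∫ x in a r..a (r+1), f x)
          = ∫ β in (0:ℝ)..1, c⁻¹ * (g r β * A β) := by
      intro r _
      rw [step2 r, ← intervalIntegral.integral_const_mul]
      exact intervalIntegral.integral_congr fun β _ => by rw [step3 r β]
    rw [Finset.sum_congr rfl e3,
      ← intervalIntegral.integral_finset_sum (f := fun r β => c⁻¹ * (g r β * A β)) (fun r _ =>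
        ((continuous_const.mul ((hgc r).mul hAc)).intervalIntegrable _ _))]
    refine intervalIntegral.integral_congr fun β _ => ?_
    rw [Finset.mul_sum, Finset.mul_sum]
    exact Finset.sum_congr rfl fun r _ => by ring
  -- Step 5: pointwise bound by F
  have step5 : ∀ β ∈ Set.Icc (0:ℝ) 1,
      A β * (c⁻¹ * ∑ r ∈ Finset.range (2 ^ h), g r β) ≤ A β * F ξ h := by
    intro β hβ
    refine mul_le_mul_of_nonneg_left ?_ (Real.exp_nonneg _)
    exact le_csSup (F_bddAbove ξ hξ.le h) ⟨β, hβ, ρ, hρ, rfl⟩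
  -- Conclude
  rw [step4]
  calc (∫ β in (0:ℝ)..1, A β * (c⁻¹ * ∑ r ∈ Finset.range (2 ^ h), g r β))
      ≤ ∫ β in (0:ℝ)..1, A β * F ξ h := by
        refine intervalIntegral.integral_mono_on zero_le_one ?_ ?_ step5
        · exact ((hAc.mul (continuous_const.mul
            (continuous_finset_sum _ fun r _ => hgc r)))).intervalIntegrable _ _
        · exact (hAc.mul continuous_const).intervalIntegrable _ _
    _ = Sint ξ ρ (L - h) * F ξ h := by
        rw [intervalIntegral.integral_mul_const]
        rfl
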